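/- Let T be a centrally symmetric triangulation of a regular (2n+2)-gon labelled according to a symmetric orientation 𝒜 of A_{2n-1}. Then the weights satisfy ω_i = ω_{2n+1−i} for all i ∈ {2,...,2n−1}, and consequently the coordinates of M_𝒜(T) = (x_1,...,x_{2n}) satisfy x_i + x_{2n+1−i} = 2n+1 for all i ∈ {2,...,2n−1}. -/

import Mathlib

open Finset

attribute [local instance] Classical.propDecidable

/- Throughout, an orientation `𝒜` of the Coxeter graph `A_{n-1}` is encoded by its set
`U` of up elements, a subset of `{2, …, n−1}`; the down elements are `[n] ∖ U` together
with the conventions that `0` and `n+1` behave like down elements.  The `(n+2)`-gon `P`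
is labelled accordingly: counterclockwise one reads `0`, the down elements in increasing
order, `n+1`, then the up elements in decreasing order. -/

/-- The position (counterclockwise, starting at `0`) of the vertex of the labelled
`(n+2)`-gon carrying the label `k ∈ {0, …, n+1}`. -/
def lblPos (n : ℕ) (U : Finset ℕ) (k : ℕ) : ℕ :=
  if k ∈ U then (n + 1 - U.card) + (U.filter (fun m => k ≤ m)).card
  else ((Finset.Icc 1 k).filter (fun m => m ∉ U)).card

/-- Labels `a` and `b` are adjacent on the boundary of the labelled `(n+2)`-gon. -/
def BndEdge (n : ℕ) (U : Finset ℕ) (a b : ℕ) : Prop :=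
  lblPos n U a + 1 = lblPos n U b ∨ lblPos n U b + 1 = lblPos n U a ∨
    (lblPos n U a = 0 ∧ lblPos n U b = n + 1) ∨
    (lblPos n U b = 0 ∧ lblPos n U a = n + 1)

/-- `(a, b)` is a diagonal of the labelled `(n+2)`-gon: a pair of distinct,
non-adjacent labels. -/
def IsDiag (n : ℕ) (U : Finset ℕ) (e : ℕ × ℕ) : Prop :=
  e.1 ≤ n + 1 ∧ e.2 ≤ n + 1 ∧ e.1 ≠ e.2 ∧ ¬ BndEdge n U e.1 e.2

/-- Two diagonals of the labelled `(n+2)`-gon cross (computed via the positions of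
their endpoints). -/
def DiagCross (n : ℕ) (U : Finset ℕ) (e f : ℕ × ℕ) : Prop :=
  ((min (lblPos n U e.1) (lblPos n U e.2) < min (lblPos n U f.1) (lblPos n U f.2)) ∧
     (min (lblPos n U f.1) (lblPos n U f.2) < max (lblPos n U e.1) (lblPos n U e.2)) ∧
     (max (lblPos n U e.1) (lblPos n U e.2) < max (lblPos n U f.1) (lblPos n U f.2))) ∨
  ((min (lblPos n U f.1) (lblPos n U f.2) < min (lblPos n U e.1) (lblPos n U e.2)) ∧
     (min (lblPos n U e.1) (lblPos n U e.2) < max (lblPos n U f.1) (lblPos n U f.2)) ∧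
     (max (lblPos n U f.1) (lblPos n U f.2) < max (lblPos n U e.1) (lblPos n U e.2)))

/-- A triangulation of the labelled `(n+2)`-gon, recorded as its set of `n−1` pairwise
non-crossing diagonals `(a, b)` with `a < b`. -/
def IsTriang (n : ℕ) (U : Finset ℕ) (T : Finset (ℕ × ℕ)) : Prop :=
  (∀ e ∈ T, e.1 < e.2 ∧ IsDiag n U e) ∧
  (∀ e ∈ T, ∀ f ∈ T, ¬ DiagCross n U e f) ∧
  T.card = n - 1

/-- `{a, b}` is an edge of the triangulation `T` (a diagonal or a boundary edge). -/
def TEdge (n : ℕ) (U : Finset ℕ) (T : Finset (ℕ × ℕ)) (a b : ℕ) : Prop :=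
  (a, b) ∈ T ∨ (b, a) ∈ T ∨ BndEdge n U a b

/-- Linear coordinate of a label `k ≤ i` along the boundary path of `P` through the
labels `≤ i` (the arc around the vertex labelled `0`). -/
def piLow (n : ℕ) (U : Finset ℕ) (k : ℕ) : ℤ :=
  if k ∈ U then -(((U.filter (fun m => m ≤ k)).card : ℤ))
  else (((Finset.Icc 1 k).filter (fun m => m ∉ U)).card : ℤ)

/-- Linear coordinate of a label `k ≥ i` along the boundary path of `P` through the
labels `≥ i` (the arc around the vertex labelled `n+1`). -/
def piHigh (n : ℕ) (U : Finset ℕ) (k : ℕ) : ℤ :=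
  if k ∈ U then -(((U.filter (fun m => k ≤ m)).card : ℤ))
  else (((Finset.Icc k n).filter (fun m => m ∉ U)).card : ℤ)

/-- The distance function `μ_i(j)`: for `j < i` the number of edges of the boundary
path connecting `i` and `j` using only labels `≤ i`; for `j ≥ i` the number of edges of
the boundary path connecting `i` and `j` using only labels `≥ i`. -/
def muD (n : ℕ) (U : Finset ℕ) (i j : ℕ) : ℕ :=
  if j < i then (piLow n U i - piLow n U j).natAbs
  else (piHigh n U i - piHigh n U j).natAbs

/-- `p_ℓ^T(i)`: the maximum of `μ_i(a)` over all `a < i` with `{a, i}` an edge of `T`. -/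
noncomputable def pl (n : ℕ) (U : Finset ℕ) (T : Finset (ℕ × ℕ)) (i : ℕ) : ℕ :=
  ((Finset.range i).filter (fun a => TEdge n U T a i)).sup (muD n U i)

/-- `p_r^T(i)`: the maximum of `μ_i(b)` over all `b > i` with `{b, i}` an edge of `T`. -/
noncomputable def pr (n : ℕ) (U : Finset ℕ) (T : Finset (ℕ × ℕ)) (i : ℕ) : ℕ :=
  ((Finset.Icc (i + 1) (n + 1)).filter (fun b => TEdge n U T i b)).sup (muD n U i)

/-- The weight `ω_i = p_ℓ^T(i) · p_r^T(i)`. -/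
noncomputable def weightW (n : ℕ) (U : Finset ℕ) (T : Finset (ℕ × ℕ)) (i : ℕ) : ℕ :=
  pl n U T i * pr n U T i

/-- The `i`-th coordinate of `M_𝒜(T)`: `ω_i` if `i` is down, `n + 1 − ω_i` if `i` is
up. -/
noncomputable def Mcoord (n : ℕ) (U : Finset ℕ) (T : Finset (ℕ × ℕ)) (i : ℕ) : ℤ :=
  if i ∈ U then (n : ℤ) + 1 - (weightW n U T i : ℤ) else (weightW n U T i : ℤ)

/-- The map `K_𝒜` assigning to a diagonal `{a, b}` (`a < b`) of the labelled
`(n+2)`-gon a subset of `[n]`: the labels read counterclockwise from `a` to `b`, with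
`0`, `n+1` and `{a, b} ∩ D_𝒜` removed. -/
def KofD (n : ℕ) (U : Finset ℕ) (a b : ℕ) : Finset ℕ :=
  if a ∈ U then
    (if b ∈ U then
      ((Finset.Icc 1 n).filter (fun i => i ∉ U)) ∪
        (U.filter (fun i => i ≤ a ∨ b ≤ i))
    else
      ((Finset.Ico 1 b).filter (fun i => i ∉ U)) ∪ (U.filter (fun i => i ≤ a)))
  else
    (if b ∈ U then
      ((Finset.Ioc a n).filter (fun i => i ∉ U)) ∪ (U.filter (fun i => b ≤ i))
    else
      (Finset.Ioo a b).filter (fun i => i ∉ U))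

/-- The central point reflection of the regular `(2n+2)`-gon, expressed on labels: it
exchanges label `i` with `2n+1−i` for `i ∈ [2n] ∖ {1, 2n}`, exchanges `1` with `2n+1`,
and exchanges `0` with `2n`. -/
def centSym (n : ℕ) (k : ℕ) : ℕ :=
  if k = 0 then 2 * n
  else if k = 2 * n then 0
  else if k = 1 then 2 * n + 1
  else if k = 2 * n + 1 then 1
  else 2 * n + 1 - k


section CSAux

variable {n : ℕ} {U : Finset ℕ}

lemma cs_invol (hn : 1 ≤ n) {k : ℕ} (hk : k ≤ 2 * n + 1) :
    centSym n (centSym n k) = k := by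
  unfold centSym; split_ifs <;> first | omega | exact False.elim ‹False›

lemma cs_le {k : ℕ} (hk : k ≤ 2 * n + 1) : centSym n k ≤ 2 * n + 1 := by
  unfold centSym; split_ifs <;> first | omega | exact False.elim ‹False›

lemma cs_eq (hn : 1 ≤ n) {k : ℕ} (h1 : 2 ≤ k) (h2 : k ≤ 2 * n - 1) :
    centSym n k = 2 * n + 1 - k := by
  unfold centSym; split_ifs <;> first | omega | exact False.elim ‹False›

lemma cs_flip1 (hn : 1 ≤ n) {i j : ℕ} (h2 : 2 ≤ i) (h3 : i ≤ 2 * n - 1) (hj : j < i) :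
    centSym n i < centSym n j := by
  unfold centSym; split_ifs <;> first | omega | exact False.elim ‹False›

lemma cs_flip2 (hn : 1 ≤ n) {i j : ℕ} (h2 : 2 ≤ i) (h3 : i ≤ 2 * n - 1) (hj : i < j)
    (hj2 : j ≤ 2 * n + 1) : centSym n j < centSym n i := by
  unfold centSym; split_ifs <;> first | omega | exact False.elim ‹False›

lemma cs_tedge_comm {T : Finset (ℕ × ℕ)} {a b : ℕ} (h : TEdge (2 * n) U T a b) :
    TEdge (2 * n) U T b a := by
  unfold TEdge BndEdge at h ⊢
  tauto

variable (hn : 1 ≤ n) (hU : ∀ k ∈ U, 1 < k ∧ k < 2 * n)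
  (hsym : ∀ i : ℕ, 1 < i → i < 2 * n → (i ∉ U ↔ 2 * n + 1 - i ∈ U))

include hn hU hsym

lemma cs_mem_flip {m : ℕ} (hm : m ∈ U) : 2 * n + 1 - m ∉ U := by
  have hb := hU m hm
  have h := hsym (2 * n + 1 - m) (by omega) (by omega)
  have e : 2 * n + 1 - (2 * n + 1 - m) = m := by omega
  rw [e] at h
  exact h.mpr hm

lemma cs_notmem_flip {m : ℕ} (h1 : 1 < m) (h2 : m < 2 * n) (hm : m ∉ U) :
    2 * n + 1 - m ∈ U :=
  (hsym m h1 h2).mp hm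

lemma cs_card : U.card = n - 1 := by
  have h2 : U.card = ((Icc 2 (2 * n - 1)).filter (fun m => m ∉ U)).card := by
    refine Finset.card_nbij' (fun m => 2 * n + 1 - m) (fun m => 2 * n + 1 - m) ?_ ?_ ?_ ?_
    · intro a ha
      have hb := hU a ha
      simp only [Finset.mem_coe, mem_filter, mem_Icc]
      exact ⟨⟨by omega, by omega⟩, cs_mem_flip hn hU hsym ha⟩
    · intro b hb
      simp only [Finset.mem_coe, mem_filter, mem_Icc] at hb
      exact cs_notmem_flip hn hU hsym (by omega) (by omega) hb.2
    · intro a ha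
      have hb := hU a ha
      show 2 * n + 1 - (2 * n + 1 - a) = a
      omega
    · intro b hb
      simp only [Finset.mem_coe, mem_filter, mem_Icc] at hb
      show 2 * n + 1 - (2 * n + 1 - b) = b
      omega
  have h1 : (Icc 2 (2 * n - 1)).filter (fun m => m ∈ U) = U := by
    ext m
    simp only [mem_filter, mem_Icc]
    exact ⟨fun h => h.2, fun h => ⟨⟨(hU m h).1, by have := (hU m h).2; omega⟩, h⟩⟩
  have h3 := Finset.card_filter_add_card_filter_not (s := Icc 2 (2 * n - 1))
    (p := fun m => m ∈ U)
  rw [h1] at h3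
  rw [Nat.card_Icc] at h3
  have h4 : ((Icc 2 (2 * n - 1)).filter (fun m => ¬ m ∈ U)).card
      = ((Icc 2 (2 * n - 1)).filter (fun m => m ∉ U)).card := rfl
  rw [h4] at h3
  omega

lemma cs_C1 {k : ℕ} (h2 : 2 ≤ k) (h3 : k ≤ 2 * n - 1) :
    (U.filter (fun m => 2 * n + 1 - k ≤ m)).card + 1
      = ((Icc 1 k).filter (fun m => m ∉ U)).card := by
  have key : (U.filter (fun m => 2 * n + 1 - k ≤ m)).card
      = ((Icc 2 k).filter (fun m => m ∉ U)).card := by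
    refine Finset.card_nbij' (fun m => 2 * n + 1 - m) (fun m => 2 * n + 1 - m) ?_ ?_ ?_ ?_
    · intro a ha
      simp only [Finset.mem_coe, mem_filter, mem_Icc] at ha ⊢
      have hb := hU a ha.1
      exact ⟨⟨by omega, by omega⟩, cs_mem_flip hn hU hsym ha.1⟩
    · intro b hb
      simp only [Finset.mem_coe, mem_filter, mem_Icc] at hb ⊢
      exact ⟨cs_notmem_flip hn hU hsym (by omega) (by omega) hb.2, by omega⟩
    · intro a ha
      simp only [Finset.mem_coe, mem_filter] at ha
      have hb := hU a ha.1
      show 2 * n + 1 - (2 * n + 1 - a) = a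
      omega
    · intro b hb
      simp only [Finset.mem_coe, mem_filter, mem_Icc] at hb
      show 2 * n + 1 - (2 * n + 1 - b) = b
      omega
  have h1U : (1 : ℕ) ∉ U := fun h => by have := hU 1 h; omega
  have e : (Icc 1 k).filter (fun m => m ∉ U)
      = insert 1 ((Icc 2 k).filter (fun m => m ∉ U)) := by
    ext m
    simp only [mem_insert, mem_filter, mem_Icc]
    constructor
    · rintro ⟨⟨hm1, hmk⟩, hmU⟩
      rcases eq_or_ne m 1 with rfl | hne
      · exact Or.inl rfl
      · exact Or.inr ⟨⟨by omega, hmk⟩, hmU⟩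
    · rintro (rfl | ⟨⟨hm2, hmk⟩, hmU⟩)
      · exact ⟨⟨le_refl 1, by omega⟩, h1U⟩
      · exact ⟨⟨by omega, hmk⟩, hmU⟩
  rw [e, Finset.card_insert_of_notMem (by simp only [mem_filter, mem_Icc]; omega), key]

lemma cs_C2 {k : ℕ} (h2 : 2 ≤ k) (h3 : k ≤ 2 * n - 1) :
    ((Icc (2 * n + 1 - k) (2 * n)).filter (fun m => m ∉ U)).card
      = (U.filter (fun m => m ≤ k)).card + 1 := by
  have key : ((Icc (2 * n + 1 - k) (2 * n - 1)).filter (fun m => m ∉ U)).card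
      = (U.filter (fun m => m ≤ k)).card := by
    refine Finset.card_nbij' (fun m => 2 * n + 1 - m) (fun m => 2 * n + 1 - m) ?_ ?_ ?_ ?_
    · intro a ha
      simp only [Finset.mem_coe, mem_filter, mem_Icc] at ha ⊢
      exact ⟨cs_notmem_flip hn hU hsym (by omega) (by omega) ha.2, by omega⟩
    · intro b hb
      simp only [Finset.mem_coe, mem_filter, mem_Icc] at hb ⊢
      have hbd := hU b hb.1
      exact ⟨⟨by omega, by omega⟩, cs_mem_flip hn hU hsym hb.1⟩
    · intro a ha
      simp only [Finset.mem_coe, mem_filter, mem_Icc] at ha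
      show 2 * n + 1 - (2 * n + 1 - a) = a
      omega
    · intro b hb
      simp only [Finset.mem_coe, mem_filter] at hb
      have hbd := hU b hb.1
      show 2 * n + 1 - (2 * n + 1 - b) = b
      omega
  have h2nU : (2 * n : ℕ) ∉ U := fun h => by have := hU _ h; omega
  have e : (Icc (2 * n + 1 - k) (2 * n)).filter (fun m => m ∉ U)
      = insert (2 * n) ((Icc (2 * n + 1 - k) (2 * n - 1)).filter (fun m => m ∉ U)) := by
    ext m
    simp only [mem_insert, mem_filter, mem_Icc]
    constructor
    · rintro ⟨⟨hm1, hmk⟩, hmU⟩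
      rcases eq_or_ne m (2 * n) with rfl | hne
      · exact Or.inl rfl
      · exact Or.inr ⟨⟨hm1, by omega⟩, hmU⟩
    · rintro (rfl | ⟨⟨hm1, hmk⟩, hmU⟩)
      · exact ⟨⟨by omega, le_refl _⟩, h2nU⟩
      · exact ⟨⟨hm1, by omega⟩, hmU⟩
  rw [e, Finset.card_insert_of_notMem (by simp only [mem_filter, mem_Icc]; omega), key]

lemma cs_E {M : ℕ} (hM : 2 * n - 1 ≤ M) :
    ((Icc 1 M).filter (fun m => m ∉ U)).card + (n - 1) = M := by
  have hsub : U ⊆ Icc 1 M := by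
    intro m h
    have := hU m h
    simp only [mem_Icc]; omega
  have h1 : (Icc 1 M).filter (fun m => m ∈ U) = U := by
    ext m
    simp only [mem_filter, mem_Icc]
    refine ⟨fun h => h.2, fun h => ⟨⟨?_, ?_⟩, h⟩⟩ <;> have := hU m h <;> omega
  rw [Finset.filter_not, h1, Finset.card_sdiff_of_subset hsub, Nat.card_Icc,
    cs_card hn hU hsym]
  have hle : U.card ≤ (Icc 1 M).card := Finset.card_le_card hsub
  rw [cs_card hn hU hsym, Nat.card_Icc] at hle
  omega

lemma cs_L1 {k : ℕ} (hk : k ≤ 2 * n - 1) :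
    piHigh (2 * n) U (centSym n k) = 1 - piLow (2 * n) U k := by
  have h0U : (0 : ℕ) ∉ U := fun h => by have := hU 0 h; omega
  have h1U : (1 : ℕ) ∉ U := fun h => by have := hU 1 h; omega
  have h2nU : (2 * n : ℕ) ∉ U := fun h => by have := hU _ h; omega
  have h2n1U : (2 * n + 1 : ℕ) ∉ U := fun h => by have := hU _ h; omega
  rcases eq_or_ne k 0 with rfl | hk0
  · have e : centSym n 0 = 2 * n := by unfold centSym; split_ifs <;> first | omega | exact False.elim ‹False›
    rw [e]
    unfold piHigh piLow
    rw [if_neg h2nU, if_neg h0U, Icc_self, Finset.filter_singleton, if_pos h2nU,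
      show Icc (1 : ℕ) 0 = ∅ from Icc_eq_empty (by omega)]
    simp
  rcases eq_or_ne k 1 with rfl | hk1
  · have e : centSym n 1 = 2 * n + 1 := by unfold centSym; split_ifs <;> first | omega | exact False.elim ‹False›
    rw [e]
    unfold piHigh piLow
    rw [if_neg h2n1U, if_neg h1U,
      show Icc (2 * n + 1) (2 * n) = ∅ from Icc_eq_empty (by omega),
      Icc_self, Finset.filter_singleton, if_pos h1U]
    simp
  · have hk2 : 2 ≤ k := by omega
    have e : centSym n k = 2 * n + 1 - k := cs_eq hn hk2 hk
    rw [e]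
    by_cases hkU : k ∈ U
    · have hsU : 2 * n + 1 - k ∉ U := cs_mem_flip hn hU hsym hkU
      unfold piHigh piLow
      rw [if_neg hsU, if_pos hkU]
      have h := cs_C2 hn hU hsym hk2 hk
      omega
    · have hsU : 2 * n + 1 - k ∈ U := cs_notmem_flip hn hU hsym (by omega) (by omega) hkU
      unfold piHigh piLow
      rw [if_pos hsU, if_neg hkU]
      have h := cs_C1 hn hU hsym hk2 hk
      omega

lemma cs_L2 {k : ℕ} (h2 : 2 ≤ k) (hk : k ≤ 2 * n + 1) :
    piLow (2 * n) U (centSym n k) = 1 - piHigh (2 * n) U k := by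
  have h0U : (0 : ℕ) ∉ U := fun h => by have := hU 0 h; omega
  have h1U : (1 : ℕ) ∉ U := fun h => by have := hU 1 h; omega
  have h2nU : (2 * n : ℕ) ∉ U := fun h => by have := hU _ h; omega
  have h2n1U : (2 * n + 1 : ℕ) ∉ U := fun h => by have := hU _ h; omega
  rcases eq_or_ne k (2 * n) with rfl | hkn
  · have e : centSym n (2 * n) = 0 := by unfold centSym; split_ifs <;> first | omega | exact False.elim ‹False›
    rw [e]
    unfold piHigh piLow
    rw [if_neg h2nU, if_neg h0U, Icc_self, Finset.filter_singleton, if_pos h2nU,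
      show Icc (1 : ℕ) 0 = ∅ from Icc_eq_empty (by omega)]
    simp
  rcases eq_or_ne k (2 * n + 1) with rfl | hkn1
  · have e : centSym n (2 * n + 1) = 1 := by unfold centSym; split_ifs <;> first | omega | exact False.elim ‹False›
    rw [e]
    unfold piHigh piLow
    rw [if_neg h2n1U, if_neg h1U,
      show Icc (2 * n + 1) (2 * n) = ∅ from Icc_eq_empty (by omega),
      Icc_self, Finset.filter_singleton, if_pos h1U]
    simp
  · have hk' : k ≤ 2 * n - 1 := by omega
    have e2 : centSym n (2 * n + 1 - k) = k := by
      rw [cs_eq hn (by omega) (by omega)]; omega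
    have hL1 := cs_L1 hn hU hsym (k := 2 * n + 1 - k) (by omega)
    rw [e2] at hL1
    rw [cs_eq hn h2 hk']
    omega

lemma cs_pos {k : ℕ} (hk : k ≤ 2 * n + 1) :
    (lblPos (2 * n) U k ≤ n ∧
      lblPos (2 * n) U (centSym n k) = lblPos (2 * n) U k + (n + 1)) ∨
    (n + 1 ≤ lblPos (2 * n) U k ∧ lblPos (2 * n) U k ≤ 2 * n + 1 ∧
      lblPos (2 * n) U (centSym n k) + (n + 1) = lblPos (2 * n) U k) := by
  have h0U : (0 : ℕ) ∉ U := fun h => by have := hU 0 h; omega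
  have h1U : (1 : ℕ) ∉ U := fun h => by have := hU 1 h; omega
  have h2nU : (2 * n : ℕ) ∉ U := fun h => by have := hU _ h; omega
  have h2n1U : (2 * n + 1 : ℕ) ∉ U := fun h => by have := hU _ h; omega
  have hpos0 : lblPos (2 * n) U 0 = 0 := by
    unfold lblPos
    rw [if_neg h0U, show Icc (1 : ℕ) 0 = ∅ from Icc_eq_empty (by omega)]
    simp
  have hpos1 : lblPos (2 * n) U 1 = 1 := by
    unfold lblPos
    rw [if_neg h1U, Icc_self, Finset.filter_singleton, if_pos h1U]
    simp
  have hposn : lblPos (2 * n) U (2 * n) = n + 1 := by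
    unfold lblPos
    rw [if_neg h2nU]
    have := cs_E hn hU hsym (M := 2 * n) (by omega)
    omega
  have hposn1 : lblPos (2 * n) U (2 * n + 1) = n + 2 := by
    unfold lblPos
    rw [if_neg h2n1U]
    have := cs_E hn hU hsym (M := 2 * n + 1) (by omega)
    omega
  rcases eq_or_ne k 0 with rfl | hk0
  · left
    have e : centSym n 0 = 2 * n := by unfold centSym; split_ifs <;> first | omega | exact False.elim ‹False›
    rw [e, hpos0, hposn]
    omega
  rcases eq_or_ne k 1 with rfl | hk1
  · left
    have e : centSym n 1 = 2 * n + 1 := by unfold centSym; split_ifs <;> first | omega | exact False.elim ‹False›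
    rw [e, hpos1, hposn1]
    omega
  rcases eq_or_ne k (2 * n) with rfl | hkn
  · right
    have e : centSym n (2 * n) = 0 := by unfold centSym; split_ifs <;> first | omega | exact False.elim ‹False›
    rw [e, hpos0, hposn]
    omega
  rcases eq_or_ne k (2 * n + 1) with rfl | hkn1
  · right
    have e : centSym n (2 * n + 1) = 1 := by unfold centSym; split_ifs <;> first | omega | exact False.elim ‹False›
    rw [e, hpos1, hposn1]
    omega
  · have hk2 : 2 ≤ k := by omega
    have hk3 : k ≤ 2 * n - 1 := by omega
    have e : centSym n k = 2 * n + 1 - k := cs_eq hn hk2 hk3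
    have hcard := cs_card hn hU hsym
    by_cases hkU : k ∈ U
    · right
      have hsU : 2 * n + 1 - k ∉ U := cs_mem_flip hn hU hsym hkU
      have hC1 := cs_C1 hn hU hsym (k := 2 * n + 1 - k) (by omega) (by omega)
      have e3 : 2 * n + 1 - (2 * n + 1 - k) = k := by omega
      rw [e3] at hC1
      have huH1 : 1 ≤ (U.filter (fun m => k ≤ m)).card :=
        Finset.card_pos.mpr ⟨k, Finset.mem_filter.mpr ⟨hkU, le_refl k⟩⟩
      have huH2 : (U.filter (fun m => k ≤ m)).card ≤ U.card :=
        Finset.card_le_card (Finset.filter_subset _ _)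
      rw [e]
      unfold lblPos
      rw [if_pos hkU, if_neg hsU]
      omega
    · left
      have hsU : 2 * n + 1 - k ∈ U := cs_notmem_flip hn hU hsym (by omega) (by omega) hkU
      have hC1 := cs_C1 hn hU hsym hk2 hk3
      have hcb : ((Icc 1 k).filter (fun m => m ∉ U)).card
          ≤ ((Icc 1 (2 * n - 1)).filter (fun m => m ∉ U)).card :=
        Finset.card_le_card
          (Finset.filter_subset_filter _ (Finset.Icc_subset_Icc_right (by omega)))
      have hE2 := cs_E hn hU hsym (M := 2 * n - 1) (le_refl _)
      rw [e]
      unfold lblPos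
      rw [if_neg hkU, if_pos hsU]
      omega

lemma cs_bnd {a b : ℕ} (ha : a ≤ 2 * n + 1) (hb : b ≤ 2 * n + 1)
    (h : BndEdge (2 * n) U a b) : BndEdge (2 * n) U (centSym n a) (centSym n b) := by
  have pa := cs_pos hn hU hsym ha
  have pb := cs_pos hn hU hsym hb
  unfold BndEdge at h ⊢
  omega

lemma cs_tedge {T : Finset (ℕ × ℕ)}
    (hcs : ∀ a b : ℕ, (a, b) ∈ T →
      (min (centSym n a) (centSym n b), max (centSym n a) (centSym n b)) ∈ T)
    {a b : ℕ} (ha : a ≤ 2 * n + 1) (hb : b ≤ 2 * n + 1)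
    (h : TEdge (2 * n) U T a b) : TEdge (2 * n) U T (centSym n a) (centSym n b) := by
  rcases h with h | h | h
  · have hm := hcs a b h
    rcases le_total (centSym n a) (centSym n b) with hle | hle
    · left; rwa [min_eq_left hle, max_eq_right hle] at hm
    · right; left; rwa [min_eq_right hle, max_eq_left hle] at hm
  · have hm := hcs b a h
    rcases le_total (centSym n a) (centSym n b) with hle | hle
    · left; rwa [min_eq_right hle, max_eq_left hle] at hm
    · right; left; rwa [min_eq_left hle, max_eq_right hle] at hm
  · right; right; exact cs_bnd hn hU hsym ha hb h

lemma cs_Mu1 {i j : ℕ} (h2 : 2 ≤ i) (h3 : i ≤ 2 * n - 1) (hij : j < i) :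
    muD (2 * n) U (centSym n i) (centSym n j) = muD (2 * n) U i j := by
  have hflip := cs_flip1 hn h2 h3 hij
  unfold muD
  rw [if_neg (by omega : ¬ centSym n j < centSym n i), if_pos hij,
    cs_L1 hn hU hsym h3, cs_L1 hn hU hsym (k := j) (by omega)]
  omega

lemma cs_Mu2 {i j : ℕ} (h2 : 2 ≤ i) (h3 : i ≤ 2 * n - 1) (hij : i < j)
    (hj : j ≤ 2 * n + 1) :
    muD (2 * n) U (centSym n i) (centSym n j) = muD (2 * n) U i j := by
  have hflip := cs_flip2 hn h2 h3 hij hj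
  unfold muD
  rw [if_pos hflip, if_neg (by omega : ¬ j < i),
    cs_L2 hn hU hsym h2 (by omega), cs_L2 hn hU hsym (k := j) (by omega) hj]
  omega

lemma cs_pl {T : Finset (ℕ × ℕ)}
    (hcs : ∀ a b : ℕ, (a, b) ∈ T →
      (min (centSym n a) (centSym n b), max (centSym n a) (centSym n b)) ∈ T)
    {i : ℕ} (h2 : 2 ≤ i) (h3 : i ≤ 2 * n - 1) :
    pl (2 * n) U T (centSym n i) = pr (2 * n) U T i := by
  have hσ2 : 2 ≤ centSym n i := by rw [cs_eq hn h2 h3]; omega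
  have hσ3 : centSym n i ≤ 2 * n - 1 := by rw [cs_eq hn h2 h3]; omega
  have hσle : centSym n i ≤ 2 * n + 1 := by omega
  have hset : (range (centSym n i)).filter (fun a => TEdge (2 * n) U T a (centSym n i))
      = ((Icc (i + 1) (2 * n + 1)).filter (fun b => TEdge (2 * n) U T i b)).image
          (centSym n) := by
    ext a
    simp only [Finset.mem_image, Finset.mem_filter, Finset.mem_range, Finset.mem_Icc]
    constructor
    · rintro ⟨hlt, hE⟩
      have ha' : a ≤ 2 * n + 1 := by omega
      refine ⟨centSym n a, ⟨⟨?_, cs_le ha'⟩, ?_⟩, cs_invol hn ha'⟩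
      · have hf := cs_flip1 hn hσ2 hσ3 hlt
        rw [cs_invol hn (by omega : i ≤ 2 * n + 1)] at hf
        omega
      · have hE' := cs_tedge hn hU hsym hcs ha' hσle hE
        rw [cs_invol hn (by omega : i ≤ 2 * n + 1)] at hE'
        exact cs_tedge_comm hE'
    · rintro ⟨b, ⟨⟨hb1, hb2⟩, hE⟩, rfl⟩
      refine ⟨cs_flip2 hn h2 h3 (by omega) hb2, ?_⟩
      exact cs_tedge_comm (cs_tedge hn hU hsym hcs (by omega : i ≤ 2 * n + 1) hb2 hE)
  unfold pl pr
  rw [hset, Finset.sup_image]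
  refine Finset.sup_congr rfl ?_
  intro b hb
  simp only [Finset.mem_filter, Finset.mem_Icc] at hb
  show muD (2 * n) U (centSym n i) (centSym n b) = muD (2 * n) U i b
  exact cs_Mu2 hn hU hsym h2 h3 (by omega) hb.1.2

lemma cs_pr {T : Finset (ℕ × ℕ)}
    (hcs : ∀ a b : ℕ, (a, b) ∈ T →
      (min (centSym n a) (centSym n b), max (centSym n a) (centSym n b)) ∈ T)
    {i : ℕ} (h2 : 2 ≤ i) (h3 : i ≤ 2 * n - 1) :
    pr (2 * n) U T (centSym n i) = pl (2 * n) U T i := by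
  have hσ2 : 2 ≤ centSym n i := by rw [cs_eq hn h2 h3]; omega
  have hσ3 : centSym n i ≤ 2 * n - 1 := by rw [cs_eq hn h2 h3]; omega
  have hσle : centSym n i ≤ 2 * n + 1 := by omega
  have hset : (Icc (centSym n i + 1) (2 * n + 1)).filter
        (fun b => TEdge (2 * n) U T (centSym n i) b)
      = ((range i).filter (fun a => TEdge (2 * n) U T a i)).image (centSym n) := by
    ext b
    simp only [Finset.mem_image, Finset.mem_filter, Finset.mem_range, Finset.mem_Icc]
    constructor
    · rintro ⟨⟨hb1, hb2⟩, hE⟩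
      refine ⟨centSym n b, ⟨?_, ?_⟩, cs_invol hn hb2⟩
      · have hf := cs_flip2 hn hσ2 hσ3 (by omega) hb2
        rw [cs_invol hn (by omega : i ≤ 2 * n + 1)] at hf
        exact hf
      · have hE' := cs_tedge hn hU hsym hcs hb2 hσle (cs_tedge_comm hE)
        rw [cs_invol hn (by omega : i ≤ 2 * n + 1)] at hE'
        exact hE'
    · rintro ⟨a, ⟨ha, hE⟩, rfl⟩
      have ha' : a ≤ 2 * n + 1 := by omega
      refine ⟨⟨cs_flip1 hn h2 h3 ha, cs_le ha'⟩, ?_⟩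
      exact cs_tedge_comm (cs_tedge hn hU hsym hcs ha' (by omega : i ≤ 2 * n + 1) hE)
  unfold pl pr
  rw [hset, Finset.sup_image]
  refine Finset.sup_congr rfl ?_
  intro a ha
  simp only [Finset.mem_filter, Finset.mem_range] at ha
  show muD (2 * n) U (centSym n i) (centSym n a) = muD (2 * n) U i a
  exact cs_Mu1 hn hU hsym h2 h3 ha.1

end CSAux

/-- Let `𝒜` be a symmetric orientation of `A_{2n-1}` (so `i` is down iff `2n+1−i` is up
for `i ∈ [2n] ∖ {1, 2n}`) and let `T` be a centrally symmetric triangulation of the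
labelled regular `(2n+2)`-gon.  Then the weights satisfy `ω_i = ω_{2n+1−i}` for all
`i ∈ {2, …, 2n−1}`, and consequently the coordinates of `M_𝒜(T)` satisfy
`x_i + x_{2n+1−i} = 2n+1` for all `i ∈ {2, …, 2n−1}`. -/
theorem centrally_symmetric_weights (n : ℕ) (hn : 1 ≤ n) (U : Finset ℕ)
    (hU : ∀ k ∈ U, 1 < k ∧ k < 2 * n)
    (hsym : ∀ i : ℕ, 1 < i → i < 2 * n → (i ∉ U ↔ 2 * n + 1 - i ∈ U))
    (T : Finset (ℕ × ℕ)) (hT : IsTriang (2 * n) U T)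
    (hcs : ∀ a b : ℕ, (a, b) ∈ T →
      (min (centSym n a) (centSym n b), max (centSym n a) (centSym n b)) ∈ T) :
    ∀ i : ℕ, 2 ≤ i → i ≤ 2 * n - 1 →
      weightW (2 * n) U T i = weightW (2 * n) U T (2 * n + 1 - i) ∧
      Mcoord (2 * n) U T i + Mcoord (2 * n) U T (2 * n + 1 - i) = 2 * (n : ℤ) + 1 := by
  intro i h2 h3'
  have h3 : i ≤ 2 * n - 1 := h3'
  have hw : weightW (2 * n) U T i = weightW (2 * n) U T (2 * n + 1 - i) := by
    rw [← cs_eq hn h2 h3]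
    unfold weightW
    rw [cs_pl hn hU hsym hcs h2 h3, cs_pr hn hU hsym hcs h2 h3]
    exact Nat.mul_comm _ _
  refine ⟨hw, ?_⟩
  unfold Mcoord
  by_cases hiU : i ∈ U
  · have hjU : 2 * n + 1 - i ∉ U := cs_mem_flip hn hU hsym hiU
    rw [if_pos hiU, if_neg hjU, ← hw]
    push_cast
    ring
  · have hjU : 2 * n + 1 - i ∈ U := cs_notmem_flip hn hU hsym (by omega) (by omega) hiU
    rw [if_neg hiU, if_pos hjU, ← hw]
    push_cast
    ring
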